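/- arXiv:math-ph/0512037 — 2 statements merged into one kernel-verified Lean document; each statement's English description precedes it below -/
import Mathlib

section
/- The partial trace identity tr_2((A⊗I)(I⊗B)P^q) = A·B^{q⁻¹} holds for all N×N matrices A, B, where B^{q⁻¹} is the q⁻¹-deformation of B. -/
open Matrix Kronecker

noncomputable section

variable {K : Type*} [Field K]

/-- Elementary matrix `E i j` with a `1` in position `(i,j)`. -/
def Emat (N : ℕ) (i j : Fin N) : Matrix (Fin N) (Fin N) K :=
  Matrix.single i j 1

/-- The `q`-permutation operator
`P^q = Σ_i E_{ii}⊗E_{ii} + q Σ_{i>j} E_{ij}⊗E_{ji} + q⁻¹ Σ_{i<j} E_{ij}⊗E_{ji}`. -/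
def Pq (N : ℕ) (q : K) : Matrix (Fin N × Fin N) (Fin N × Fin N) K :=
  (∑ i : Fin N, Emat N i i ⊗ₖ Emat N i i)
    + q • ∑ i : Fin N, ∑ j : Fin N, (if j < i then Emat N i j ⊗ₖ Emat N j i else 0)
    + q⁻¹ • ∑ i : Fin N, ∑ j : Fin N, (if i < j then Emat N i j ⊗ₖ Emat N j i else 0)

/-- The (undeformed) permutation operator `P = Σ_{a,b} E_{ab}⊗E_{ba}`. -/
def Pperm (N : ℕ) : Matrix (Fin N × Fin N) (Fin N × Fin N) K :=
  ∑ a : Fin N, ∑ b : Fin N, Emat N a b ⊗ₖ Emat N b a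

/-- The constant `R`-matrix of `U_q(gl(N))`:
`R = q Σ_a E_{aa}⊗E_{aa} + Σ_{a≠b} E_{aa}⊗E_{bb} + (q−q⁻¹) Σ_{a<b} E_{ab}⊗E_{ba}`. -/
def Rconst (N : ℕ) (q : K) : Matrix (Fin N × Fin N) (Fin N × Fin N) K :=
  q • (∑ a : Fin N, Emat N a a ⊗ₖ Emat N a a)
    + (∑ a : Fin N, ∑ b : Fin N, (if a ≠ b then Emat N a a ⊗ₖ Emat N b b else 0))
    + (q - q⁻¹) • ∑ a : Fin N, ∑ b : Fin N, (if a < b then Emat N a b ⊗ₖ Emat N b a else 0)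

/-- `b(z) = z − z⁻¹`; note `a(z) = qz − q⁻¹z⁻¹ = bf (q*z)`. -/
def bf (z : K) : K := z - z⁻¹

/-- The spectral-parameter `R`-matrix `R(z) = b(z)(I⊗I − P^q) + a(z)P`. -/
def Rz (N : ℕ) (q z : K) : Matrix (Fin N × Fin N) (Fin N × Fin N) K :=
  bf z • ((1 : Matrix (Fin N × Fin N) (Fin N × Fin N) K) - Pq N q) + bf (q * z) • Pperm N

/-- `A ↦ A_{21} = P A P` : exchange the two tensor factors. -/
def sw {N : ℕ} {R : Type*} (A : Matrix (Fin N × Fin N) (Fin N × Fin N) R) :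
    Matrix (Fin N × Fin N) (Fin N × Fin N) R :=
  Matrix.of fun p r => A (p.2, p.1) (r.2, r.1)

/-- Partial transposition in the first tensor factor. -/
def pt1 {N : ℕ} {R : Type*} (A : Matrix (Fin N × Fin N) (Fin N × Fin N) R) :
    Matrix (Fin N × Fin N) (Fin N × Fin N) R :=
  Matrix.of fun p r => A (r.1, p.2) (p.1, r.2)

/-- Partial transposition in the second tensor factor. -/
def pt2 {N : ℕ} {R : Type*} (A : Matrix (Fin N × Fin N) (Fin N × Fin N) R) :
    Matrix (Fin N × Fin N) (Fin N × Fin N) R :=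
  Matrix.of fun p r => A (p.1, r.2) (r.1, p.2)

/-- Partial trace over the first tensor factor. -/
def ptr1 {N : ℕ} {R : Type*} [AddCommMonoid R]
    (A : Matrix (Fin N × Fin N) (Fin N × Fin N) R) : Matrix (Fin N) (Fin N) R :=
  Matrix.of fun i j => ∑ k : Fin N, A (k, i) (k, j)

/-- Partial trace over the second tensor factor. -/
def ptr2 {N : ℕ} {R : Type*} [AddCommMonoid R]
    (A : Matrix (Fin N × Fin N) (Fin N × Fin N) R) : Matrix (Fin N) (Fin N) R :=
  Matrix.of fun i j => ∑ k : Fin N, A (i, k) (j, k)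

/-- Embed an operator on `C^N ⊗ C^N` as acting on factors 1,2 of `C^N ⊗ C^N ⊗ C^N`. -/
def amp12 {N : ℕ} (A : Matrix (Fin N × Fin N) (Fin N × Fin N) K) :
    Matrix (Fin N × Fin N × Fin N) (Fin N × Fin N × Fin N) K :=
  Matrix.of fun p r => A (p.1, p.2.1) (r.1, r.2.1) * (if p.2.2 = r.2.2 then 1 else 0)

/-- Embed an operator on `C^N ⊗ C^N` as acting on factors 1,3 of `C^N ⊗ C^N ⊗ C^N`. -/
def amp13 {N : ℕ} (A : Matrix (Fin N × Fin N) (Fin N × Fin N) K) :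
    Matrix (Fin N × Fin N × Fin N) (Fin N × Fin N × Fin N) K :=
  Matrix.of fun p r => A (p.1, p.2.2) (r.1, r.2.2) * (if p.2.1 = r.2.1 then 1 else 0)

/-- Embed an operator on `C^N ⊗ C^N` as acting on factors 2,3 of `C^N ⊗ C^N ⊗ C^N`. -/
def amp23 {N : ℕ} (A : Matrix (Fin N × Fin N) (Fin N × Fin N) K) :
    Matrix (Fin N × Fin N × Fin N) (Fin N × Fin N × Fin N) K :=
  Matrix.of fun p r => (if p.1 = r.1 then 1 else 0) * A (p.2.1, p.2.2) (r.2.1, r.2.2)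

/-- The `q`-deformation of a matrix: `(A^q)_{ij} = q^{sgn(j-i)} A_{ij}`. -/
def deform {R : Type*} [Ring R] [Algebra K R] {N : ℕ} (q : K)
    (A : Matrix (Fin N) (Fin N) R) : Matrix (Fin N) (Fin N) R :=
  Matrix.of fun i j =>
    (q ^ (if i < j then (1 : ℤ) else if j < i then (-1 : ℤ) else 0)) • A i j

/-- The matrix `M = Σ_a θ₀ q^{N−2a+1} E_{aa}` (with 1-indexed `a`). -/
def Mθ (N : ℕ) (q θ : K) : Matrix (Fin N) (Fin N) K :=
  Matrix.diagonal fun a => θ * q ^ ((N : ℤ) - 2 * ((a : ℕ) : ℤ) - 1)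

lemma hsum2' {M : Type*} [AddCommMonoid M] {N : ℕ} (k b : Fin N) (f : Fin N → Fin N → M)
    (h : ∀ x y, x ≠ k ∨ y ≠ b → f x y = 0) :
    (∑ x : Fin N, ∑ y : Fin N, f x y) = f k b := by
  rw [Finset.sum_eq_single k (fun x _ hx => by
      apply Finset.sum_eq_zero; intro y _; exact h x y (Or.inl hx))
    (fun hk => absurd (Finset.mem_univ k) hk)]
  exact Finset.sum_eq_single b (fun y _ hy => h k y (Or.inr hy))
    (fun hb => absurd (Finset.mem_univ b) hb)

lemma hsum1' {M : Type*} [AddCommMonoid M] {N : ℕ} (b : Fin N) (f : Fin N → M)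
    (h : ∀ x, x ≠ b → f x = 0) : (∑ x : Fin N, f x) = f b :=
  Finset.sum_eq_single b (fun x _ hx => h x hx) (fun hb => absurd (Finset.mem_univ b) hb)

lemma Pq_apply' (N : ℕ) (q : K) (a b j k : Fin N) :
    Pq N q (a, b) (j, k)
      = if a = k ∧ b = j then (if b < a then q else if a < b then q⁻¹ else 1) else 0 := by
  simp only [Pq, Emat, Matrix.add_apply, Matrix.smul_apply, Matrix.sum_apply,
    apply_ite (f := fun M : Matrix (Fin N × Fin N) (Fin N × Fin N) K => M (a,b) (j,k)),
    Matrix.zero_apply, Matrix.smul_apply, Matrix.kroneckerMap_apply,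
    Matrix.single, Matrix.of_apply, smul_eq_mul,
    mul_ite, mul_one, mul_zero, ite_mul, zero_mul, one_mul]
  rw [hsum1' b _ (fun x h => by split_ifs <;> simp_all),
      hsum2' k b _ (fun x y h => by rcases h with h | h <;> split_ifs <;> simp_all),
      hsum2' k b _ (fun x y h => by rcases h with h | h <;> split_ifs <;> simp_all)]
  split_ifs <;> simp only [mul_one, mul_zero, add_zero, zero_add] <;> first | rfl | omega

/-- partial trace identity `tr₂(A₁ B₂ P^q) = A · B^{q⁻¹}`. -/
theorem ptr2_Pq {R : Type*} [Ring R] [Algebra K R] (N : ℕ) (q : K) (hq : q ≠ 0)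
    (A B : Matrix (Fin N) (Fin N) R) :
    ptr2 ((A ⊗ₖ (1 : Matrix (Fin N) (Fin N) R))
        * ((1 : Matrix (Fin N) (Fin N) R) ⊗ₖ B)
        * ((Pq N q).map (algebraMap K R)))
      = A * deform q⁻¹ B := by
  have h1 : (A ⊗ₖ (1 : Matrix (Fin N) (Fin N) R))
      * ((1 : Matrix (Fin N) (Fin N) R) ⊗ₖ B) = A ⊗ₖ B := by
    ext ⟨i,k⟩ ⟨j,l⟩
    simp only [Matrix.mul_apply, Matrix.kroneckerMap_apply, Fintype.sum_prod_type,
      Matrix.one_apply, mul_ite, mul_one, mul_zero, ite_mul, zero_mul, one_mul,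
      Finset.sum_ite_eq, Finset.sum_ite_eq', Finset.mem_univ, if_true]
    rw [hsum2' j k _ (fun x y h => by rcases h with h | h <;> split_ifs <;> simp_all)]
    simp
  rw [h1]
  ext i j
  simp only [ptr2, Matrix.of_apply, Matrix.mul_apply, Matrix.map_apply,
    Fintype.sum_prod_type, Matrix.kroneckerMap_apply, Pq_apply',
    apply_ite (algebraMap K R), map_zero, mul_ite, mul_zero, ite_and]
  refine Finset.sum_congr rfl fun k _ => ?_
  rw [hsum2' k j _ (fun x y h => by rcases h with h | h <;> split_ifs <;> simp_all)]
  simp only [if_pos rfl, deform, Matrix.of_apply, _root_.map_one, mul_one]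
  rcases lt_trichotomy k j with h | h | h
  · simp only [if_true, if_neg (not_lt.2 h.le), if_pos h, zpow_one, Algebra.smul_def,
      Algebra.commutes, mul_assoc]
  · subst h; simp
  · simp only [if_true, if_neg (not_lt.2 h.le), if_pos h, _root_.zpow_neg_one, inv_inv,
      Algebra.smul_def, Algebra.commutes, mul_assoc]

end
end

section
/- The transposed R-matrix identity holds: (R_{12}⁻¹)^{t₁} = M₁⁻¹ (R_{12}^{t₁})⁻¹ M₁, where M = Σ_a θ₀ q^{N−2a+1} E_{aa} with θ₀ = ±1, and t₁ denotes partial transposition in the first tensor factor. -/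
open Matrix Kronecker

noncomputable section

variable {K : Type*} [Field K]

lemma ite_matrix_apply {m n α : Type*} {c : Prop} [Decidable c]
    (A B : Matrix m n α) (i : m) (j : n) :
    (if c then A else B) i j = if c then A i j else B i j := by
  split <;> rfl

lemma sum2_eq {N : ℕ} {f : Fin N → Fin N → K} (i j : Fin N)
    (h : ∀ x x1, f x x1 ≠ 0 → x = i ∧ x1 = j) :
    (∑ x : Fin N, ∑ x1 : Fin N, f x x1) = f i j := by
  rw [Fintype.sum_eq_single i (fun b hb => Finset.sum_eq_zero fun x1 _ => by
    by_contra h0; exact hb (h b x1 h0).1),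
    Fintype.sum_eq_single j (fun b hb => by by_contra h0; exact hb (h i b h0).2)]

set_option maxHeartbeats 1000000 in
lemma Rconst_apply (N : ℕ) (q : K) (p r : Fin N × Fin N) :
    Rconst N q p r = (if r = p then (if p.1 = p.2 then q else 1) else 0)
      + (if r = (p.2, p.1) ∧ p.1 < p.2 then q - q⁻¹ else 0) := by
  obtain ⟨i, j⟩ := p; obtain ⟨k, l⟩ := r
  simp only [Rconst, Emat, Matrix.add_apply, Matrix.smul_apply, Matrix.sum_apply,
    ite_matrix_apply, Matrix.zero_apply, Matrix.kroneckerMap_apply, Matrix.single,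
    Matrix.of_apply, smul_eq_mul]
  simp only [Finset.sum_ite_eq, Finset.sum_ite_eq', ite_and, mul_ite, mul_one, mul_zero,
    ite_mul, one_mul, zero_mul, Finset.sum_ite_irrel, Finset.sum_const_zero, Finset.mem_univ,
    if_true, Prod.mk.injEq, Prod.ext_iff]
  rw [sum2_eq i j (by intro x x1 h0; constructor <;> (by_contra hc; simp_all)),
    sum2_eq i j (by intro x x1 h0; constructor <;> (by_contra hc; simp_all))]
  simp only [Fin.ext_iff, Fin.lt_def, ne_eq]
  split_ifs <;> first | omega | ring
/-- Explicit inverse of `Rconst`. -/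
def Sinv (N : ℕ) (q : K) : Matrix (Fin N × Fin N) (Fin N × Fin N) K :=
  Matrix.of fun p r => (if r = p then (if p.1 = p.2 then q⁻¹ else 1) else 0)
    - (if r = (p.2, p.1) ∧ p.1 < p.2 then q - q⁻¹ else 0)

set_option maxHeartbeats 1000000 in
lemma Rconst_mul_Sinv (N : ℕ) (q : K) (hq : q ≠ 0) :
    Rconst N q * Sinv N q = 1 := by
  ext p r
  rw [Matrix.mul_apply]
  simp only [Rconst_apply, Sinv, Matrix.of_apply, add_mul, ite_mul, zero_mul,
    Finset.sum_add_distrib, ite_and]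
  rw [Finset.sum_ite_eq' Finset.univ p, Finset.sum_ite_eq' Finset.univ ((p.2, p.1) : Fin N × Fin N)]
  obtain ⟨i, j⟩ := p; obtain ⟨k, l⟩ := r
  simp only [Finset.mem_univ, if_true, Matrix.one_apply, Prod.mk.injEq, Prod.ext_iff,
    Fin.ext_iff, Fin.lt_def]
  split_ifs <;> try (first | omega | ring)
  all_goals exact mul_inv_cancel₀ hq

lemma geoN (q : K) (hq : q ≠ 0) (k : ℕ) : ∀ i : ℕ, k < i →
    (q - q⁻¹) * ∑ a ∈ Finset.Ico (k+1) i, q ^ (2*((k:ℤ) - (a:ℤ)))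
      = q⁻¹ - q ^ (2*((k:ℤ) - (i:ℤ)) + 1) := by
  intro i hki
  induction i, hki using Nat.le_induction with
  | base =>
      have h1 : 2*((k:ℤ) - ((k+1:ℕ):ℤ)) + 1 = -1 := by push_cast; ring
      simp [h1]
  | succ n hn ih =>
      have hsum := Finset.sum_Ico_succ_top hn (f := fun a => q ^ (2*((k:ℤ) - (a:ℤ))))
      push_cast at hsum ⊢
      rw [hsum, mul_add, ih]
      have e2 : (2*((k:ℤ) - (n+1)) + 1) = (2*((k:ℤ) - n)) - 1 := by ring
      have hA : q ^ ((2*((k:ℤ)-(n:ℤ))) - 1) = q ^ (2*((k:ℤ)-(n:ℤ))) * q⁻¹ := by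
        rw [zpow_sub_one₀ hq]
      have hB : q ^ ((2*((k:ℤ)-(n:ℤ))) + 1) = q ^ (2*((k:ℤ)-(n:ℤ))) * q := by
        rw [zpow_add_one₀ hq]
      rw [e2, hA, hB]
      ring

lemma geoF (q : K) (hq : q ≠ 0) {N : ℕ} (k i : Fin N) (hki : k < i) :
    (q - q⁻¹) * ∑ a : Fin N, (if (k:ℕ) < (a:ℕ) ∧ (a:ℕ) < (i:ℕ)
        then q ^ (2*(((k:ℕ):ℤ) - ((a:ℕ):ℤ))) else 0)
      = q⁻¹ - q ^ (2*(((k:ℕ):ℤ) - ((i:ℕ):ℤ)) + 1) := by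
  have hs : ∑ a : Fin N, (if (k:ℕ) < (a:ℕ) ∧ (a:ℕ) < (i:ℕ)
        then q ^ (2*(((k:ℕ):ℤ) - ((a:ℕ):ℤ))) else 0)
      = ∑ a ∈ Finset.Ico ((k:ℕ)+1) (i:ℕ), q ^ (2*(((k:ℕ):ℤ) - (a:ℤ))) := by
    rw [Fin.sum_univ_eq_sum_range
      (fun n => if (k:ℕ) < n ∧ n < (i:ℕ) then q ^ (2*(((k:ℕ):ℤ) - (n:ℤ)) ) else 0) N]
    rw [← Finset.sum_filter]
    have hsub : Finset.filter (fun n => (k:ℕ) < n ∧ n < (i:ℕ)) (Finset.range N)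
        = Finset.Ico ((k:ℕ)+1) (i:ℕ) := by
      ext n
      simp only [Finset.mem_filter, Finset.mem_range, Finset.mem_Ico]
      have := i.2
      omega
    rw [hsub]
  rw [hs, geoN q hq (k:ℕ) (i:ℕ) hki]

/-- Explicit inverse of `pt1 (Rconst N q)`. -/
def Tinv (N : ℕ) (q : K) : Matrix (Fin N × Fin N) (Fin N × Fin N) K :=
  Matrix.of fun p r => (if r = p then (if p.1 = p.2 then q⁻¹ else 1) else 0)
    - (if p.1 = p.2 ∧ r.1 = r.2 ∧ (r.1:ℕ) < (p.1:ℕ)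
        then (q - q⁻¹) * q ^ (2*(((r.1:ℕ):ℤ) - ((p.1:ℕ):ℤ))) else 0)

lemma pt1_Rconst_apply (N : ℕ) (q : K) (p r : Fin N × Fin N) :
    pt1 (Rconst N q) p r = (if r = p then (if p.1 = p.2 then q else 1) else 0)
      + (if p.1 = p.2 ∧ r.1 = r.2 ∧ (r.1:ℕ) < (p.1:ℕ) then q - q⁻¹ else 0) := by
  obtain ⟨i, j⟩ := p; obtain ⟨k, l⟩ := r
  show Rconst N q (k, j) (i, l) = _
  rw [Rconst_apply]
  simp only [Prod.mk.injEq, Prod.ext_iff, Fin.ext_iff, Fin.lt_def]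
  split_ifs <;> first | omega | ring

set_option maxHeartbeats 1000000 in
lemma key_diag (N : ℕ) (q : K) (hq : q ≠ 0) (i k l : Fin N) :
    q * Tinv N q (i,i) (k,l)
      + (q - q⁻¹) * ∑ a : Fin N, (if (a:ℕ) < (i:ℕ) then Tinv N q (a,a) (k,l) else 0)
      = if k = i ∧ l = i then 1 else 0 := by
  by_cases hkl : k = l
  · subst hkl
    have hterm : ∀ a : Fin N, (if (a:ℕ) < (i:ℕ) then Tinv N q (a,a) (k,k) else 0)
        = (if a = k then (if (k:ℕ) < (i:ℕ) then q⁻¹ else 0) else 0)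
          - (if (k:ℕ) < (a:ℕ) ∧ (a:ℕ) < (i:ℕ)
              then (q - q⁻¹) * q ^ (2*(((k:ℕ):ℤ) - ((a:ℕ):ℤ))) else 0) := by
      intro a
      simp only [Tinv, Matrix.of_apply, Prod.mk.injEq, Prod.ext_iff, Fin.ext_iff, Fin.lt_def,
          eq_self_iff_true, true_and, and_true, lt_self_iff_false, and_false, false_and]
      split_ifs <;> first | omega | ring
    rw [Finset.sum_congr rfl (fun a _ => hterm a), Finset.sum_sub_distrib,
      Finset.sum_ite_eq' Finset.univ k (fun _ => if (k:ℕ) < (i:ℕ) then q⁻¹ else 0)]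
    simp only [Finset.mem_univ, if_true]
    have hpull : ∑ a : Fin N, (if (k:ℕ) < (a:ℕ) ∧ (a:ℕ) < (i:ℕ)
          then (q - q⁻¹) * q ^ (2*(((k:ℕ):ℤ) - ((a:ℕ):ℤ))) else 0)
        = (q - q⁻¹) * ∑ a : Fin N, (if (k:ℕ) < (a:ℕ) ∧ (a:ℕ) < (i:ℕ)
            then q ^ (2*(((k:ℕ):ℤ) - ((a:ℕ):ℤ))) else 0) := by
      rw [Finset.mul_sum]
      exact Finset.sum_congr rfl fun a _ => by split_ifs <;> ring
    rw [hpull]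
    by_cases hki : (k:ℕ) < (i:ℕ)
    · have hg := geoF q hq k i (by rwa [Fin.lt_def])
      have hki' : ¬ k = i := by rw [Fin.ext_iff]; omega
      have hTi : Tinv N q (i,i) (k,k) = -((q - q⁻¹) * q ^ (2*(((k:ℕ):ℤ) - ((i:ℕ):ℤ)))) := by
        simp only [Tinv, Matrix.of_apply, Prod.mk.injEq, Prod.ext_iff, Fin.ext_iff, Fin.lt_def,
          eq_self_iff_true, true_and, and_true, lt_self_iff_false, and_false, false_and]
        split_ifs <;> first | omega | ring
      have hq1 : q * q ^ (2*(((k:ℕ):ℤ) - ((i:ℕ):ℤ)))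
          = q ^ (2*(((k:ℕ):ℤ) - ((i:ℕ):ℤ)) + 1) := by
        rw [zpow_add_one₀ hq]; ring
      rw [hTi, if_pos hki, if_neg (fun h => hki' h.1)]
      linear_combination (-(q - q⁻¹)) * hg + (-(q - q⁻¹)) * hq1
    · have hgz : ∑ a : Fin N, (if (k:ℕ) < (a:ℕ) ∧ (a:ℕ) < (i:ℕ)
            then q ^ (2*(((k:ℕ):ℤ) - ((a:ℕ):ℤ))) else 0) = 0 :=
        Finset.sum_eq_zero fun a _ => by rw [if_neg (by omega)]
      rw [hgz, if_neg hki]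
      by_cases hki2 : k = i
      · subst hki2
        have hTi : Tinv N q (k,k) (k,k) = q⁻¹ := by
          simp [Tinv]
        rw [hTi, if_pos ⟨rfl, rfl⟩]
        simp [mul_inv_cancel₀ hq]
      · have hTi : Tinv N q (i,i) (k,k) = 0 := by
          simp only [Tinv, Matrix.of_apply, Prod.mk.injEq, Prod.ext_iff, Fin.ext_iff, Fin.lt_def,
          eq_self_iff_true, true_and, and_true, lt_self_iff_false, and_false, false_and]
          rw [Fin.ext_iff] at hki2
          split_ifs <;> first | omega | ring
        rw [hTi, if_neg (by rintro ⟨h1, _⟩; exact hki2 h1)]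
        ring
  · have hterm : ∀ a : Fin N, (if (a:ℕ) < (i:ℕ) then Tinv N q (a,a) (k,l) else 0) = 0 := by
      intro a
      have : Tinv N q (a,a) (k,l) = 0 := by
        simp only [Tinv, Matrix.of_apply, Prod.mk.injEq, Prod.ext_iff, Fin.ext_iff, Fin.lt_def,
          eq_self_iff_true, true_and, and_true, lt_self_iff_false, and_false, false_and]
        rw [Fin.ext_iff] at hkl
        split_ifs <;> first | omega | ring
      rw [this]; simp
    rw [Finset.sum_congr rfl (fun a _ => hterm a), Finset.sum_const_zero]
    have hTi : Tinv N q (i,i) (k,l) = 0 := by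
      simp only [Tinv, Matrix.of_apply, Prod.mk.injEq, Prod.ext_iff, Fin.ext_iff, Fin.lt_def,
          eq_self_iff_true, true_and, and_true, lt_self_iff_false, and_false, false_and]
      rw [Fin.ext_iff] at hkl
      split_ifs <;> first | omega | ring
    rw [hTi, if_neg (by rintro ⟨h1, h2⟩; exact hkl (h1.trans h2.symm))]
    ring

set_option maxHeartbeats 1000000 in
lemma pt1R_mul_Tinv (N : ℕ) (q : K) (hq : q ≠ 0) :
    pt1 (Rconst N q) * Tinv N q = 1 := by
  ext p r
  rw [Matrix.mul_apply]
  simp only [pt1_Rconst_apply, add_mul, ite_mul, zero_mul, one_mul, Finset.sum_add_distrib]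
  rw [Fintype.sum_prod_type, Fintype.sum_prod_type]
  obtain ⟨i, j⟩ := p; obtain ⟨k, l⟩ := r
  simp only [Prod.mk.injEq, ite_and, Finset.sum_ite_eq, Finset.sum_ite_eq',
    Finset.sum_ite_irrel, Finset.sum_const_zero, Finset.mem_univ, if_true]
  by_cases hij : i = j
  · subst hij
    simp only [eq_self_iff_true, if_true]
    have := key_diag N q hq i k l
    rw [Finset.mul_sum] at this
    simp only [mul_ite, mul_zero] at this
    rw [this]
    simp [Matrix.one_apply, Prod.ext_iff, and_comm, eq_comm]
  · simp only [if_neg hij, if_neg (fun h : j = i => hij h.symm), Finset.sum_const_zero, add_zero]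
    simp only [Tinv, Matrix.of_apply, Matrix.one_apply, Prod.mk.injEq, Prod.ext_iff,
      Fin.ext_iff, Fin.lt_def]
    rw [Fin.ext_iff] at hij
    split_ifs <;> first | omega | ring

lemma pt1_Sinv_apply (N : ℕ) (q : K) (p r : Fin N × Fin N) :
    pt1 (Sinv N q) p r = (if r = p then (if p.1 = p.2 then q⁻¹ else 1) else 0)
      - (if p.1 = p.2 ∧ r.1 = r.2 ∧ (r.1:ℕ) < (p.1:ℕ) then q - q⁻¹ else 0) := by
  obtain ⟨i, j⟩ := p; obtain ⟨k, l⟩ := r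
  show Sinv N q (k, j) (i, l) = _
  simp only [Sinv, Matrix.of_apply, Prod.mk.injEq, Prod.ext_iff, Fin.ext_iff, Fin.lt_def]
  split_ifs <;> first | omega | ring

lemma diagkron_mul {N : ℕ} (d : Fin N → K) (A : Matrix (Fin N × Fin N) (Fin N × Fin N) K) :
    (Matrix.diagonal d ⊗ₖ (1 : Matrix (Fin N) (Fin N) K)) * A
      = Matrix.of fun p r => d p.1 * A p r := by
  ext p r
  rw [Matrix.mul_apply, Fintype.sum_prod_type]
  simp only [Matrix.kroneckerMap_apply, Matrix.diagonal_apply, Matrix.one_apply,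
    ite_mul, zero_mul, one_mul, mul_ite, mul_zero, Finset.sum_ite_eq, Finset.sum_ite_eq',
    Finset.sum_const_zero, Finset.mem_univ, if_true, Matrix.of_apply]
  rw [mul_one]

lemma mul_diagkron {N : ℕ} (d : Fin N → K) (A : Matrix (Fin N × Fin N) (Fin N × Fin N) K) :
    A * (Matrix.diagonal d ⊗ₖ (1 : Matrix (Fin N) (Fin N) K))
      = Matrix.of fun p r => A p r * d r.1 := by
  ext p r
  rw [Matrix.mul_apply, Fintype.sum_prod_type]
  simp only [Matrix.kroneckerMap_apply, Matrix.diagonal_apply, Matrix.one_apply,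
    ite_mul, zero_mul, one_mul, mul_ite, mul_zero, Finset.sum_ite_eq, Finset.sum_ite_eq',
    Finset.sum_const_zero, Finset.mem_univ, if_true, Matrix.of_apply]
  rw [mul_one]

lemma conj_eq (N : ℕ) (q θ : K) (hq : q ≠ 0) (hθ0 : θ ≠ 0) (p r : Fin N × Fin N) :
    pt1 (Sinv N q) p r
      = (θ⁻¹ * q ^ (-((N:ℤ) - 2*((p.1:ℕ):ℤ) - 1))) * Tinv N q p r
          * (θ * q ^ ((N:ℤ) - 2*((r.1:ℕ):ℤ) - 1)) := by
  have hθθ : θ⁻¹ * θ = 1 := inv_mul_cancel₀ hθ0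
  rw [pt1_Sinv_apply]
  simp only [Tinv, Matrix.of_apply]
  by_cases hrp : r = p
  · subst hrp
    rw [if_pos rfl]
    have hno : ¬(r.1 = r.2 ∧ r.1 = r.2 ∧ (r.1:ℕ) < (r.1:ℕ)) := fun h => lt_irrefl _ h.2.2
    rw [if_neg hno, if_neg hno]; simp only [sub_zero]
    have h1 : q ^ (-((N:ℤ) - 2*((r.1:ℕ):ℤ) - 1)) * q ^ ((N:ℤ) - 2*((r.1:ℕ):ℤ) - 1) = 1 := by
      rw [← zpow_add₀ hq]; simp
    generalize (if r.1 = r.2 then q⁻¹ else 1) = X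
    linear_combination (-(X * θ⁻¹ * θ)) * h1 + (-X) * hθθ
  · rw [if_neg hrp]
    by_cases hoff : p.1 = p.2 ∧ r.1 = r.2 ∧ (r.1:ℕ) < (p.1:ℕ)
    · rw [if_pos hoff, if_pos hoff]; simp only [zero_sub]
      have hz : q ^ (-((N:ℤ) - 2*((p.1:ℕ):ℤ) - 1)) * q ^ (2*(((r.1:ℕ):ℤ) - ((p.1:ℕ):ℤ)))
            * q ^ ((N:ℤ) - 2*((r.1:ℕ):ℤ) - 1) = 1 := by
        rw [← zpow_add₀ hq, ← zpow_add₀ hq,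
          show -((N:ℤ) - 2*((p.1:ℕ):ℤ) - 1) + 2*(((r.1:ℕ):ℤ) - ((p.1:ℕ):ℤ))
              + ((N:ℤ) - 2*((r.1:ℕ):ℤ) - 1) = 0 from by ring, zpow_zero]
      linear_combination ((q - q⁻¹) * θ⁻¹ * θ) * hz + (q - q⁻¹) * hθθ
    · rw [if_neg hoff, if_neg hoff]
      ring

theorem Rconst_inv_pt1' (N : ℕ) (q θ : K) (hq : q ≠ 0) (hθ : θ = 1 ∨ θ = -1) :
    pt1 ((Rconst N q)⁻¹)
      = (Mθ N q θ ⊗ₖ (1 : Matrix (Fin N) (Fin N) K))⁻¹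
          * (pt1 (Rconst N q))⁻¹ * (Mθ N q θ ⊗ₖ (1 : Matrix (Fin N) (Fin N) K)) := by
  have hθ0 : θ ≠ 0 := by rcases hθ with h | h <;> simp [h]
  have hθθ' : θ * θ⁻¹ = 1 := mul_inv_cancel₀ hθ0
  have hMθ : Mθ N q θ
      = Matrix.diagonal (fun a : Fin N => θ * q ^ ((N:ℤ) - 2*((a:ℕ):ℤ) - 1)) := rfl
  have hMM : (Mθ N q θ ⊗ₖ (1 : Matrix (Fin N) (Fin N) K))
      * (Matrix.diagonal (fun a : Fin N => θ⁻¹ * q ^ (-((N:ℤ) - 2*((a:ℕ):ℤ) - 1)))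
          ⊗ₖ (1 : Matrix (Fin N) (Fin N) K)) = 1 := by
    rw [← Matrix.mul_kronecker_mul, Matrix.one_mul, hMθ, Matrix.diagonal_mul_diagonal]
    have hdd : ∀ a : Fin N,
        (θ * q ^ ((N:ℤ) - 2*((a:ℕ):ℤ) - 1)) * (θ⁻¹ * q ^ (-((N:ℤ) - 2*((a:ℕ):ℤ) - 1))) = 1 := by
      intro a
      have hz : q ^ ((N:ℤ) - 2*((a:ℕ):ℤ) - 1) * q ^ (-((N:ℤ) - 2*((a:ℕ):ℤ) - 1)) = 1 := by
        rw [← zpow_add₀ hq]; simp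
      linear_combination (θ * θ⁻¹) * hz + hθθ'
    have : (Matrix.diagonal fun a : Fin N =>
        (θ * q ^ ((N:ℤ) - 2*((a:ℕ):ℤ) - 1)) * (θ⁻¹ * q ^ (-((N:ℤ) - 2*((a:ℕ):ℤ) - 1))))
        = (1 : Matrix (Fin N) (Fin N) K) := by
      rw [← Matrix.diagonal_one]
      exact congrArg Matrix.diagonal (funext hdd)
    rw [this, Matrix.one_kronecker_one]
  rw [Matrix.inv_eq_right_inv (Rconst_mul_Sinv N q hq),
    Matrix.inv_eq_right_inv (pt1R_mul_Tinv N q hq),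
    Matrix.inv_eq_right_inv hMM, diagkron_mul, hMθ, mul_diagkron]
  ext p r
  simp only [Matrix.of_apply]
  exact conj_eq N q θ hq hθ0 p r

/-- `(R₁₂⁻¹)^{t₁} = M₁⁻¹ (R₁₂^{t₁})⁻¹ M₁`. -/
theorem Rconst_inv_pt1 (N : ℕ) (q θ : K) (hq : q ≠ 0) (hθ : θ = 1 ∨ θ = -1) :
    pt1 ((Rconst N q)⁻¹)
      = (Mθ N q θ ⊗ₖ (1 : Matrix (Fin N) (Fin N) K))⁻¹
          * (pt1 (Rconst N q))⁻¹ * (Mθ N q θ ⊗ₖ (1 : Matrix (Fin N) (Fin N) K)) :=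
  Rconst_inv_pt1' N q θ hq hθ

end
end
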